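/- Let G be a group, S ⊆ G a finite subset, and let S^Aut = {φ(s) : φ ∈ Aut(G), s ∈ S}. Suppose there is an Aut-invariant homogeneous quasimorphism f on G and an element g₀ of the subgroup generated by S^Aut with f(g₀) ≠ 0. Then the word norm with respect to S^Aut is unbounded on ⟨S^Aut⟩: for every C ∈ ℕ there exists g ∈ ⟨S^Aut⟩ such that every expression of g as a product of elements of S^Aut has length at least C. -/

import Mathlib

/-- if a group admits an `Aut`-invariant homogeneous quasimorphism that is
nonzero somewhere on the subgroup generated by the `Aut`-closure of a finite set `S`,
then the word norm with respect to that `Aut`-closure is unbounded on this subgroup. -/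
theorem aut_invariant_word_norm_unbounded
    {G : Type*} [Group G] (S : Finset G)
    (SAut : Set G) (hSAut : SAut = {t : G | ∃ (φ : G ≃* G) (s : G), s ∈ (S : Set G) ∧ t = φ s})
    (f : G → ℝ)
    (hqm : ∃ D : ℝ, ∀ g h : G, |f g + f h - f (g * h)| ≤ D)
    (hhom : ∀ (g : G) (n : ℤ), f (g ^ n) = n * f g)
    (hinv : ∀ (φ : G ≃* G) (g : G), f (φ g) = f g)
    (g₀ : G) (hg₀ : g₀ ∈ Subgroup.closure SAut) (hf : f g₀ ≠ 0) :
    ∀ C : ℕ, ∃ g ∈ Subgroup.closure SAut,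
      ∀ L : List G, (∀ t ∈ L, t ∈ SAut) → L.prod = g → C ≤ L.length := by
  classical
  intro C
  obtain ⟨D, hD⟩ := hqm
  have hf1 : f 1 = 0 := by
    have := hhom 1 0; simpa using this
  have hD0 : 0 ≤ D := by
    have := hD 1 1; simp [hf1] at this; linarith
  set T := insert (1 : G) S with hT
  have hTne : T.Nonempty := ⟨1, Finset.mem_insert_self _ _⟩
  set M := T.sup' hTne (fun s => |f s|) with hM
  have hM0 : 0 ≤ M := le_trans (abs_nonneg (f 1)) (Finset.le_sup' (fun s => |f s|) (Finset.mem_insert_self 1 S))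
  have hbound : ∀ t ∈ SAut, |f t| ≤ M := by
    intro t ht
    rw [hSAut] at ht
    obtain ⟨φ, s, hs, rfl⟩ := ht
    rw [hinv]
    exact Finset.le_sup' (fun s => |f s|) (Finset.mem_insert_of_mem hs)
  have hprod : ∀ L : List G, (∀ t ∈ L, t ∈ SAut) → |f L.prod| ≤ L.length * (M + D) := by
    intro L
    induction L with
    | nil => simp [hf1]
    | cons a L ih =>
      intro h
      have h1 := hD a L.prod
      have h2 := ih (fun t ht => h t (List.mem_cons_of_mem _ ht))
      have h3 := hbound a (h a List.mem_cons_self)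
      simp only [List.prod_cons, List.length_cons]
      have key : |f (a * L.prod)| ≤ |f a| + |f L.prod| + D := by
        have : f (a * L.prod) = (f a + f L.prod) - (f a + f L.prod - f (a * L.prod)) := by ring
        rw [this]
        calc |(f a + f L.prod) - (f a + f L.prod - f (a * L.prod))|
            ≤ |f a + f L.prod| + |f a + f L.prod - f (a * L.prod)| := abs_sub _ _
          _ ≤ (|f a| + |f L.prod|) + D := add_le_add (abs_add_le _ _) h1
          _ = |f a| + |f L.prod| + D := by ring
      push_cast
      nlinarith
  obtain ⟨n, hn⟩ := exists_nat_gt ((C : ℝ) * (M + D) / |f g₀|)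
  have hfg : 0 < |f g₀| := abs_pos.mpr hf
  have hn' : (C : ℝ) * (M + D) < n * |f g₀| := by
    rw [div_lt_iff₀ hfg] at hn; linarith
  refine ⟨g₀ ^ n, pow_mem hg₀ n, ?_⟩
  intro L hL hLp
  have hval : |f (g₀ ^ n)| = n * |f g₀| := by
    have : f (g₀ ^ n) = (n : ℝ) * f g₀ := by
      have := hhom g₀ (n : ℤ)
      rw [zpow_natCast] at this
      push_cast at this ⊢
      exact this
    rw [this, abs_mul, Nat.abs_cast]
  have hlen := hprod L hL
  rw [hLp, hval] at hlen
  by_contra hC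
  push_neg at hC
  have hlenC : (L.length : ℝ) ≤ (C : ℝ) := by exact_mod_cast (le_of_lt hC)
  have hMD0 : 0 ≤ M + D := by linarith
  nlinarith
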